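/- arXiv:1807.08837 — 2 statements merged into one kernel-verified Lean document; each statement's English description precedes it below -/
import Mathlib

section
/- (Pliss-type density of hyperbolic times) If $(\xi,p)\in\Sigma_N\times I$ satisfies $\chi_+(\xi,p)>\chi-\varepsilon>0$, then $(\xi,p)$ has infinitely many hyperbolic times with exponent $\chi-\varepsilon$, and moreover the set of such hyperbolic times has positive lower density: there is $d_0>0$ with $\liminf_{n\to\infty}\frac1n\#\{1\le k\le n: k\text{ is a hyperbolic time for }(\xi,p)\}\ge d_0$. -/
open Set Filter MeasureTheory Topology

noncomputable section

/-- The base space `Σ_N = {1,…,N}^ℤ`. -/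
abbrev BSeq (N : ℕ) := ℤ → Fin N

/-- The shift map on bilateral sequences. -/
def shiftSeq {α : Type*} (ξ : ℤ → α) : ℤ → α := fun n => ξ (n + 1)

/-- The unit interval. -/
def I01 : Set ℝ := Set.Icc 0 1

/-- Forward composition of fiber maps: `fw h ξ n = h (ξ (n-1)) ∘ ⋯ ∘ h (ξ 0)`. -/
def fw {α : Type*} (h : α → ℝ → ℝ) (ξ : ℤ → α) : ℕ → ℝ → ℝ
  | 0 => id
  | n + 1 => fun p => h (ξ (n : ℤ)) (fw h ξ n p)

/-- The step skew-product `F(ξ,p) = (σξ, f_{ξ₀}(p))`. -/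
def Fmap {N : ℕ} (f : Fin N → ℝ → ℝ) (z : BSeq N × ℝ) : BSeq N × ℝ :=
  (shiftSeq z.1, f (z.1 0) z.2)


/-- `n` is a hyperbolic time for `(ξ,p)` with exponent `ρ`:
for all `m = 0,…,n`, `|(f_{ξ_m⋯ξ_n})'(f_{ξ_0⋯ξ_{m-1}}(p))| ≥ e^{(n-m+1)ρ}`. -/
def hypTime {N : ℕ} (f : Fin N → ℝ → ℝ) (ξ : BSeq N) (p : ℝ) (ρ : ℝ) (n : ℕ) : Prop :=
  ∀ m : ℕ, m ≤ n →
    Real.exp (((n - m + 1 : ℕ) : ℝ) * ρ) ≤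
      |deriv (fw f (fun j => ξ (j + (m : ℤ))) (n - m + 1)) (fw f ξ m p)|

lemma fw_mem {N : ℕ} (f : Fin N → ℝ → ℝ) (hmap : ∀ i, Set.MapsTo (f i) I01 I01)
    (η : ℤ → Fin N) (q : ℝ) (hq : q ∈ I01) : ∀ n, fw f η n q ∈ I01
  | 0 => hq
  | n + 1 => hmap _ (fw_mem f hmap η q hq n)

lemma fw_deriv_prod {N : ℕ} (f : Fin N → ℝ → ℝ) (hmap : ∀ i, Set.MapsTo (f i) I01 I01)
    (hdiff : ∀ i, ∀ q ∈ I01, DifferentiableAt ℝ (f i) q)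
    (η : ℤ → Fin N) (q : ℝ) (hq : q ∈ I01) :
    ∀ n, DifferentiableAt ℝ (fw f η n) q ∧
      deriv (fw f η n) q = ∏ k ∈ Finset.range n, deriv (f (η (k : ℤ))) (fw f η k q) := by
  intro n
  induction n with
  | zero => simp [fw, differentiableAt_id]
  | succ n IH =>
    have hgd : DifferentiableAt ℝ (f (η (n : ℤ))) (fw f η n q) :=
      hdiff _ _ (fw_mem f hmap η q hq n)
    have hcomp : fw f η (n + 1) = (f (η (n : ℤ))) ∘ (fw f η n) := rfl
    constructor
    · rw [hcomp]; exact hgd.comp q IH.1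
    · rw [hcomp, deriv_comp q hgd IH.1, IH.2, Finset.prod_range_succ]; ring

lemma fw_shift {N : ℕ} (f : Fin N → ℝ → ℝ) (ξ : ℤ → Fin N) (p : ℝ) (m : ℕ) :
    ∀ k, fw f (fun j => ξ (j + (m : ℤ))) k (fw f ξ m p) = fw f ξ (m + k) p := by
  intro k
  induction k with
  | zero => rfl
  | succ k IH =>
    show f (ξ ((k : ℤ) + (m : ℤ))) _ = f (ξ ((m + k : ℕ) : ℤ)) _
    rw [IH]
    congr 2
    push_cast; ring

lemma key_prod {N : ℕ} (f : Fin N → ℝ → ℝ) (hmap : ∀ i, Set.MapsTo (f i) I01 I01)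
    (hdiff : ∀ i, ∀ q ∈ I01, DifferentiableAt ℝ (f i) q)
    (ξ : ℤ → Fin N) (p : ℝ) (hp : p ∈ I01) (m L : ℕ) :
    deriv (fw f (fun j => ξ (j + (m : ℤ))) L) (fw f ξ m p)
      = ∏ k ∈ Finset.range L, deriv (f (ξ ((m + k : ℕ) : ℤ))) (fw f ξ (m + k) p) := by
  rw [(fw_deriv_prod f hmap hdiff (fun j => ξ (j + (m : ℤ))) (fw f ξ m p)
    (fw_mem f hmap ξ p hp m) L).2]
  refine Finset.prod_congr rfl fun k _ => ?_
  rw [fw_shift f ξ p m k]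
  have hcast : ((k : ℤ) + (m : ℤ)) = ((m + k : ℕ) : ℤ) := by push_cast; ring
  rw [hcast]



lemma pliss_count (b : ℕ → ℝ) (B : ℝ) (hB : 0 < B) (hb : ∀ k, b k ≤ B)
    (Good : ℕ → Prop) [DecidablePred Good]
    (hGood : ∀ m, Good m ↔ ∀ k ≤ m,
      (∑ j ∈ Finset.range k, b j) ≤ ∑ j ∈ Finset.range (m + 1), b j) :
    ∀ n, (∑ j ∈ Finset.range n, b j) ≤ B * ((Finset.range n).filter Good).card := by
  intro n
  induction n using Nat.strong_induction_on with
  | _ n IH =>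
    match n with
    | 0 => simp
    | Nat.succ n =>
      by_cases h : Good n
      · have hc : ((Finset.range (n + 1)).filter Good).card
            = ((Finset.range n).filter Good).card + 1 := by
          rw [Finset.range_add_one, Finset.filter_insert, if_pos h,
            Finset.card_insert_of_notMem (by simp)]
        have h1 := IH n (Nat.lt_succ_self n)
        rw [Finset.sum_range_succ, hc]
        push_cast
        have := hb n
        linarith
      · rw [hGood] at h
        push_neg at h
        obtain ⟨k, hk, hlt⟩ := h
        have h1 := IH k (by omega)
        have h2 : (((Finset.range k).filter Good).card : ℝ)
            ≤ ((Finset.range (n + 1)).filter Good).card := by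
          exact_mod_cast Finset.card_le_card
            (Finset.filter_subset_filter _ (Finset.range_subset_range.2 (by omega)))
        nlinarith

lemma abstract_pliss (Good : ℕ → Prop) (b : ℕ → ℝ) (B δ : ℝ) (hB : 0 < B) (hδ : 0 < δ)
    (hb : ∀ k, b k ≤ B)
    (hGood : ∀ m, Good m ↔ ∀ k ≤ m,
      (∑ j ∈ Finset.range k, b j) ≤ ∑ j ∈ Finset.range (m + 1), b j)
    (hT : Tendsto (fun n : ℕ => (n : ℝ)⁻¹ * ∑ j ∈ Finset.range n, b j)
      atTop (nhds δ)) :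
    {n : ℕ | Good n}.Infinite ∧ ∃ d0 : ℝ, 0 < d0 ∧
      d0 ≤ liminf (fun n : ℕ =>
        ((Set.Icc 1 n ∩ {k : ℕ | Good k}).ncard : ℝ) / n) atTop := by
  classical
  set T : ℕ → ℝ := fun n => ∑ j ∈ Finset.range n, b j with hTdef
  have hpl : ∀ n, T n ≤ B * ((Finset.range n).filter Good).card :=
    pliss_count b B hB hb Good hGood
  have hucnt : ∀ n : ℕ, (Set.Icc 1 n ∩ {k : ℕ | Good k}).ncard
      = ((Finset.Icc 1 n).filter Good).card := by
    intro n
    rw [← Set.ncard_coe_finset]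
    congr 1
    ext k
    simp [Finset.mem_filter, Finset.mem_Icc, Set.mem_Icc]
  have hcntle : ∀ n, ((Finset.range (n + 1)).filter Good).card
      ≤ ((Finset.Icc 1 n).filter Good).card + 1 := by
    intro n
    have h0 : Finset.range (n + 1) = insert 0 (Finset.Icc 1 n) := by
      ext k; simp [Finset.mem_range, Finset.mem_Icc, Nat.lt_succ_iff]; omega
    rw [h0, Finset.filter_insert]
    split
    · exact Finset.card_insert_le _ _
    · exact Nat.le_succ _
  have h1 : Tendsto (fun n : ℕ => ((n : ℝ) + 1)⁻¹ * T (n + 1)) atTop (nhds δ) := by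
    have h := hT.comp (tendsto_add_atTop_nat 1)
    refine h.congr fun n => ?_
    simp only [Function.comp]
    push_cast
    ring_nf
    rfl
  have hr : Tendsto (fun n : ℕ => ((n : ℝ) + 1) / n) atTop (nhds 1) := by
    have h : Tendsto (fun n : ℕ => (1 : ℝ) + (n : ℝ)⁻¹) atTop (nhds (1 + 0)) :=
      tendsto_const_nhds.add tendsto_inv_atTop_nhds_zero_nat
    rw [add_zero] at h
    refine h.congr' ?_
    filter_upwards [eventually_ge_atTop 1] with n hn
    have hn0 : (n : ℝ) ≠ 0 := Nat.cast_ne_zero.2 (by omega)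
    field_simp
  have h2 := hr.mul h1
  rw [one_mul] at h2
  have h3 : Tendsto (fun n : ℕ => (n : ℝ)⁻¹ * T (n + 1)) atTop (nhds δ) := by
    refine h2.congr' ?_
    filter_upwards [eventually_ge_atTop 1] with n hn
    have hn0 : (n : ℝ) ≠ 0 := Nat.cast_ne_zero.2 (by omega)
    field_simp
  set d0 : ℝ := δ / (4 * B) with hd0
  have hd0pos : 0 < d0 := by positivity
  have hev : ∀ᶠ n : ℕ in atTop,
      d0 ≤ (((Finset.Icc 1 n).filter Good).card : ℝ) / n := by
    have e1 : ∀ᶠ n : ℕ in atTop, δ / 2 ≤ (n : ℝ)⁻¹ * T (n + 1) :=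
      h3.eventually (eventually_ge_nhds (by linarith))
    have e2 : ∀ᶠ n : ℕ in atTop, (n : ℝ)⁻¹ ≤ d0 :=
      tendsto_inv_atTop_nhds_zero_nat.eventually (eventually_le_nhds hd0pos)
    filter_upwards [e1, e2, eventually_ge_atTop 1] with n he1 he2 hn1
    have hn0 : (0 : ℝ) < n := by exact_mod_cast Nat.pos_of_ne_zero (by omega)
    have hinv0 : (0 : ℝ) < (n : ℝ)⁻¹ := inv_pos.2 hn0
    have hple := hpl (n + 1)
    have hc := hcntle n
    set c : ℕ := ((Finset.Icc 1 n).filter Good).card with hcdef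
    have hcR : (((Finset.range (n + 1)).filter Good).card : ℝ) ≤ (c : ℝ) + 1 := by
      exact_mod_cast hc
    have hTb : T (n + 1) ≤ B * ((c : ℝ) + 1) := by nlinarith
    have step : δ / 2 ≤ B * ((c : ℝ) * (n : ℝ)⁻¹) + B * d0 := by
      have k1 : (n : ℝ)⁻¹ * T (n + 1) ≤ (n : ℝ)⁻¹ * (B * ((c : ℝ) + 1)) := by
        exact mul_le_mul_of_nonneg_left hTb hinv0.le
      have k2 : B * (n : ℝ)⁻¹ ≤ B * d0 := mul_le_mul_of_nonneg_left he2 hB.le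
      nlinarith
    have hBd0 : B * d0 = δ / 4 := by
      rw [hd0]
      field_simp
    have h4 : δ / 4 ≤ B * ((c : ℝ) * (n : ℝ)⁻¹) := by linarith
    have hkey : d0 ≤ (c : ℝ) * (n : ℝ)⁻¹ := by
      rw [hd0, div_le_iff₀ (by positivity)]
      nlinarith
    calc d0 ≤ (c : ℝ) * (n : ℝ)⁻¹ := hkey
      _ = (c : ℝ) / n := (div_eq_mul_inv _ _).symm
  have hev' : ∀ᶠ n : ℕ in atTop,
      d0 ≤ ((Set.Icc 1 n ∩ {k : ℕ | Good k}).ncard : ℝ) / n := by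
    filter_upwards [hev] with n h
    rw [hucnt n]
    exact h
  constructor
  · by_contra hfin
    rw [Set.not_infinite] at hfin
    have hbound : ∀ n : ℕ, ((Finset.Icc 1 n).filter Good).card
        ≤ hfin.toFinset.card := by
      intro n
      exact Finset.card_le_card fun k hk => by
        simp only [Set.Finite.mem_toFinset, Set.mem_setOf_eq]
        exact (Finset.mem_filter.1 hk).2
    set C : ℕ := hfin.toFinset.card with hCdef
    have e3 : ∀ᶠ n : ℕ in atTop, (C : ℝ) * (n : ℝ)⁻¹ < d0 := by
      have h := tendsto_inv_atTop_nhds_zero_nat.const_mul (C : ℝ)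
      rw [mul_zero] at h
      exact h.eventually (eventually_lt_nhds hd0pos)
    obtain ⟨n, hn1, hn2, hn3⟩ := (hev.and (e3.and (eventually_ge_atTop 1))).exists
    have hn0 : (0 : ℝ) < n := by
      have : (1 : ℕ) ≤ n := hn3
      exact_mod_cast Nat.pos_of_ne_zero (by omega)
    have : (((Finset.Icc 1 n).filter Good).card : ℝ) / n ≤ (C : ℝ) * (n : ℝ)⁻¹ := by
      rw [← div_eq_mul_inv]
      gcongr
      exact_mod_cast hbound n
    linarith [hn1, hn2]
  · refine ⟨d0, hd0pos, ?_⟩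
    refine le_liminf_of_le ?_ hev'
    refine isCoboundedUnder_ge_of_eventually_le atTop (x := 1) ?_
    filter_upwards [eventually_ge_atTop 1] with n hn
    rw [hucnt n]
    have hn0 : (0 : ℝ) < n := by exact_mod_cast Nat.pos_of_ne_zero (by omega)
    rw [div_le_one hn0]
    calc (((Finset.Icc 1 n).filter Good).card : ℝ)
        ≤ ((Finset.Icc 1 n).card : ℝ) := by exact_mod_cast Finset.card_le_card (Finset.filter_subset _ _)
      _ ≤ n := by rw [Nat.card_Icc, Nat.add_sub_cancel]


/-- **Pliss-type lemma.** If the forward fiber Lyapunov exponent of `(ξ,p)` exceeds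
`χ - ε > 0`, then `(ξ,p)` has infinitely many hyperbolic times with exponent `χ - ε`,
with positive lower density. -/
theorem hyperbolic_times_positive_density
    {N : ℕ} (f : Fin N → ℝ → ℝ)
    (hC1 : ∀ i, ContDiffOn ℝ 1 (f i) I01)
    (hinj : ∀ i, Set.InjOn (f i) I01)
    (hmap : ∀ i, Set.MapsTo (f i) I01 I01)
    (hder : ∀ i, ∀ p ∈ I01, deriv (f i) p ≠ 0)
    (ξ : BSeq N) (p : ℝ) (hp : p ∈ I01)
    (χ ε χplus : ℝ) (hpos : 0 < χ - ε)
    (hlim : Filter.Tendsto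
      (fun n : ℕ => (n : ℝ)⁻¹ * Real.log |deriv (fw f ξ n) p|)
      Filter.atTop (nhds χplus))
    (hgt : χ - ε < χplus) :
    {n : ℕ | hypTime f ξ p (χ - ε) n}.Infinite ∧
    ∃ d0 : ℝ, 0 < d0 ∧
      d0 ≤ Filter.liminf
        (fun n : ℕ =>
          ((Set.Icc 1 n ∩ {k : ℕ | hypTime f ξ p (χ - ε) k}).ncard : ℝ) / n)
        Filter.atTop := by
  classical
  have hdiff : ∀ i, ∀ q ∈ I01, DifferentiableAt ℝ (f i) q := by
    intro i q hq
    by_contra h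
    exact hder i q hq (deriv_zero_of_not_differentiableAt h)
  have hx : ∀ k, fw f ξ k p ∈ I01 := fw_mem f hmap ξ p hp
  have hdpos : ∀ k : ℕ, 0 < |deriv (f (ξ (k : ℤ))) (fw f ξ k p)| :=
    fun k => abs_pos.2 (hder _ _ (hx k))
  -- uniform bound on the logs of the derivatives
  have hbd : ∀ i : Fin N, ∃ C : ℝ, ∀ q ∈ I01, |deriv (f i) q| ≤ C := by
    intro i
    have hcont : ContinuousOn (derivWithin (f i) I01) I01 :=
      (hC1 i).continuousOn_derivWithin
        (uniqueDiffOn_Icc zero_lt_one : UniqueDiffOn ℝ I01) le_rfl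
    obtain ⟨C, hC⟩ := (isCompact_Icc : IsCompact I01).exists_bound_of_continuousOn hcont
    refine ⟨C, fun q hq => ?_⟩
    have h := hC q hq
    have hu : UniqueDiffWithinAt ℝ I01 q :=
      (uniqueDiffOn_Icc zero_lt_one : UniqueDiffOn ℝ I01) q hq
    have h' : derivWithin (f i) I01 q = deriv (f i) q :=
      DifferentiableAt.derivWithin (hdiff i q hq) hu
    rwa [Real.norm_eq_abs, h'] at h
  choose C hC using hbd
  have h0mem : (0 : ℝ) ∈ I01 := by
    simp [I01]
  have hCnonneg : ∀ i, 0 ≤ C i := fun i =>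
    le_trans (abs_nonneg _) (hC i 0 h0mem)
  have hdleA : ∀ k : ℕ, |deriv (f (ξ (k : ℤ))) (fw f ξ k p)| ≤ ∑ i : Fin N, C i :=
    fun k => le_trans (hC _ _ (hx k))
      (Finset.single_le_sum (fun j _ => hCnonneg j) (Finset.mem_univ _))
  have haA : ∀ k : ℕ, Real.log |deriv (f (ξ (k : ℤ))) (fw f ξ k p)|
      ≤ Real.log (∑ i : Fin N, C i) :=
    fun k => Real.log_le_log (hdpos k) (hdleA k)
  set B : ℝ := max (Real.log (∑ i : Fin N, C i) - (χ - ε)) 1 with hBdef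
  have hB : 0 < B := lt_of_lt_of_le one_pos (le_max_right _ _)
  have hbB : ∀ k : ℕ,
      Real.log |deriv (f (ξ (k : ℤ))) (fw f ξ k p)| - (χ - ε) ≤ B :=
    fun k => le_trans (by linarith [haA k]) (le_max_left _ _)
  -- the Birkhoff-type sum formula
  have hSa : ∀ n, Real.log |deriv (fw f ξ n) p|
      = ∑ k ∈ Finset.range n, Real.log |deriv (f (ξ (k : ℤ))) (fw f ξ k p)| := by
    intro n
    rw [(fw_deriv_prod f hmap hdiff ξ p hp n).2, Finset.abs_prod,
      Real.log_prod (fun k _ => (hdpos k).ne')]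
  have hsub : ∀ m : ℕ,
      ∑ j ∈ Finset.range m,
        (Real.log |deriv (f (ξ (j : ℤ))) (fw f ξ j p)| - (χ - ε))
      = (∑ j ∈ Finset.range m, Real.log |deriv (f (ξ (j : ℤ))) (fw f ξ j p)|)
        - m * (χ - ε) := by
    intro m
    rw [Finset.sum_sub_distrib, Finset.sum_const, Finset.card_range, nsmul_eq_mul]
  -- characterization of hyperbolic times via partial sums
  have hGood : ∀ n, hypTime f ξ p (χ - ε) n ↔ ∀ k ≤ n,
      (∑ j ∈ Finset.range k,
        (Real.log |deriv (f (ξ (j : ℤ))) (fw f ξ j p)| - (χ - ε)))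
      ≤ ∑ j ∈ Finset.range (n + 1),
        (Real.log |deriv (f (ξ (j : ℤ))) (fw f ξ j p)| - (χ - ε)) := by
    intro n
    unfold hypTime
    refine forall₂_congr fun k hk => ?_
    rw [key_prod f hmap hdiff ξ p hp k (n - k + 1), Finset.abs_prod,
      ← Real.le_log_iff_exp_le (Finset.prod_pos fun j _ => hdpos (k + j)),
      Real.log_prod (fun j _ => (hdpos (k + j)).ne')]
    have h2 := Finset.sum_range_add
      (fun t => Real.log |deriv (f (ξ (t : ℤ))) (fw f ξ t p)|) k (n - k + 1)
    rw [show k + (n - k + 1) = n + 1 by omega] at h2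
    have hcast : ((n - k + 1 : ℕ) : ℝ) = (n : ℝ) - k + 1 := by
      rw [Nat.cast_add, Nat.cast_sub hk, Nat.cast_one]
    rw [hsub k, hsub (n + 1), hcast, h2]
    push_cast
    constructor <;> intro h <;> linarith
  -- the limit of the averaged sums
  have hlim2 : Filter.Tendsto (fun n : ℕ => (n : ℝ)⁻¹ *
      ∑ k ∈ Finset.range n, Real.log |deriv (f (ξ (k : ℤ))) (fw f ξ k p)|)
      Filter.atTop (nhds χplus) :=
    hlim.congr fun n => by rw [hSa n]
  have hT : Filter.Tendsto (fun n : ℕ => (n : ℝ)⁻¹ *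
      ∑ j ∈ Finset.range n,
        (Real.log |deriv (f (ξ (j : ℤ))) (fw f ξ j p)| - (χ - ε)))
      Filter.atTop (nhds (χplus - (χ - ε))) := by
    have h := hlim2.sub_const (χ - ε)
    refine h.congr' ?_
    filter_upwards [Filter.eventually_ge_atTop 1] with n hn
    have hn0 : (n : ℝ) ≠ 0 := Nat.cast_ne_zero.2 (by omega)
    rw [hsub n]
    field_simp
  exact abstract_pliss (hypTime f ξ p (χ - ε))
    (fun k => Real.log |deriv (f (ξ (k : ℤ))) (fw f ξ k p)| - (χ - ε))
    B (χplus - (χ - ε)) hB (by linarith) hbB hGood hT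
end
end

section
/- (Symmetry of maximal fibers) With the extended step skew-product $G$ over $\Sigma_A$ as constructed, set $I_\omega=\bigcap_{n\ge1}g_{\omega_{-n}\cdots\omega_{-1}}(I)$ for $\omega\in\Sigma_A$ and $I_{\bar\omega}=\bigcap_{n\ge1}f_{\bar\omega_{-n}\cdots\bar\omega_{-1}}(I)$ for $\bar\omega=\pi(\omega)\in\Sigma_N$. Then $I_\omega=I_{\bar\omega}$ whenever $\omega_0\le N$, and $I_\omega=R(I_{\bar\omega})$ whenever $\omega_0>N$, where $R(x)=1-x$. -/
open Set Filter MeasureTheory Topology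

noncomputable section

/-- Doubled symbol set `{1,…,2N}`: `(i, false)` is `i`, `(i, true)` is `i + N`. -/
abbrev DSym (N : ℕ) := Fin N × Bool

/-- `A`-admissibility for the orientation-doubling transition matrix, where
`part i = true` iff `f i` is orientation preserving. -/
def Admissible {N : ℕ} (part : Fin N → Bool) (ω : ℤ → DSym N) : Prop :=
  ∀ n : ℤ, (ω (n + 1)).2 = xor ((ω n).2) (!(part (ω n).1))

/-- The subshift of finite type `Σ_A` of `A`-admissible bilateral sequences. -/
abbrev SigmaA (N : ℕ) (part : Fin N → Bool) := {ω : ℤ → DSym N // Admissible part ω}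

/-- The shift map `σ_A` on `Σ_A`. -/
def shiftA {N : ℕ} {part : Fin N → Bool} (ω : SigmaA N part) : SigmaA N part :=
  ⟨shiftSeq ω.1, fun n => ω.2 (n + 1)⟩

/-- The 2-to-1 projection `π : Σ_A → Σ_N`, `π(ω)_n = ω_n mod N`. -/
def piA {N : ℕ} {part : Fin N → Bool} (ω : SigmaA N part) : BSeq N :=
  fun n => (ω.1 n).1

/-- The reflection `R(x) = 1 - x`. -/
def R : ℝ → ℝ := fun x => 1 - x

/-- The fiber maps of the extended step skew-product:
`g_i = f_i`, `g_{i+N} = R∘f_i∘R` for orientation-preserving `f_i`, and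
`g_i = R∘f_i`, `g_{i+N} = f_i∘R` for orientation-reversing `f_i`. -/
def gmap {N : ℕ} (f : Fin N → ℝ → ℝ) (part : Fin N → Bool) : DSym N → ℝ → ℝ :=
  fun s =>
    if part s.1 then (if s.2 then R ∘ f s.1 ∘ R else f s.1)
    else (if s.2 then f s.1 ∘ R else R ∘ f s.1)

/-- The extended step skew-product `G(ω,x) = (σ_A ω, g_{ω₀}(x))`. -/
def Gmap {N : ℕ} {part : Fin N → Bool} (f : Fin N → ℝ → ℝ)
    (z : SigmaA N part × ℝ) : SigmaA N part × ℝ :=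
  (shiftA z.1, gmap f part (z.1.1 0) z.2)

/-- The 2-to-1 projection `Π : Σ_A × I → Σ_N × I`. -/
def PiMap {N : ℕ} {part : Fin N → Bool} (z : SigmaA N part × ℝ) : BSeq N × ℝ :=
  (piA z.1, if (z.1.1 0).2 then R z.2 else z.2)

/-- Orientation hypothesis: `part` records which fiber maps preserve orientation. -/
def OrientPart {N : ℕ} (f : Fin N → ℝ → ℝ) (part : Fin N → Bool) : Prop :=
  ∀ i, (part i = true → StrictMonoOn (f i) I01) ∧ (part i = false → StrictAntiOn (f i) I01)

/-- Backward composition image: `h_{ω_{-1}} ∘ ⋯ ∘ h_{ω_{-n}} (I)`. -/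
def bwImg {α : Type*} (h : α → ℝ → ℝ) (ω : ℤ → α) (n : ℕ) : Set ℝ :=
  fw h (fun j => ω (j - (n : ℤ))) n '' I01

/-- The maximal fiber over `ω`: `I_ω = ⋂_{n≥1} h_{ω_{-1}⋯ω_{-n}}(I)`. -/
def maxFiber {α : Type*} (h : α → ℝ → ℝ) (ω : ℤ → α) : Set ℝ :=
  ⋂ n : ℕ, bwImg h ω (n + 1)

lemma R_invol (x : ℝ) : R (R x) = x := by simp [R]

lemma R_image_I01 : R '' I01 = I01 := by
  ext x
  constructor
  · rintro ⟨y, ⟨h0, h1⟩, rfl⟩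
    exact ⟨by simp [R]; linarith, by simp [R]; linarith⟩
  · rintro ⟨h0, h1⟩
    exact ⟨R x, ⟨by simp [R]; linarith, by simp [R]; linarith⟩, R_invol x⟩

lemma gmap_eq {N : ℕ} (f : Fin N → ℝ → ℝ) (part : Fin N → Bool) (s : DSym N) (x : ℝ) :
    gmap f part s x =
      (if xor s.2 (!(part s.1)) then R else id)
        (f s.1 ((if s.2 then R else id) x)) := by
  unfold gmap
  rcases s with ⟨i, b⟩
  cases hb : part i <;> cases b <;> simp [R_invol]

lemma fw_g_eq {N : ℕ} (f : Fin N → ℝ → ℝ) (part : Fin N → Bool)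
    (ω : ℤ → DSym N) (hadm : Admissible part ω) :
    ∀ (n : ℕ) (x : ℝ), fw (gmap f part) ω n x =
      (if (ω n).2 then R else id)
        (fw f (fun j => (ω j).1) n ((if (ω 0).2 then R else id) x)) := by
  intro n
  induction n with
  | zero => intro x; cases h : (ω 0).2 <;> simp [fw, h, R_invol]
  | succ n ih =>
    intro x
    have hstep := hadm n
    show gmap f part (ω n) (fw (gmap f part) ω n x) = _
    rw [ih x, gmap_eq]
    have : (if (ω (n:ℤ)).2 then R else id)
        ((if (ω (n:ℤ)).2 then R else id)
          (fw f (fun j => (ω j).1) n ((if (ω 0).2 then R else id) x)))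
        = fw f (fun j => (ω j).1) n ((if (ω 0).2 then R else id) x) := by
      cases h : (ω (n:ℤ)).2 <;> simp [R_invol]
    rw [this]
    rw [show ((↑(n + 1) : ℤ)) = ((n : ℤ) + 1) by push_cast; ring, hstep]
    rfl

lemma admissible_shift {N : ℕ} (part : Fin N → Bool) (ω : ℤ → DSym N)
    (hadm : Admissible part ω) (k : ℤ) : Admissible part (fun j => ω (j - k)) := by
  intro n
  have := hadm (n - k)
  simpa [show n + 1 - k = n - k + 1 by ring] using this

lemma bwImg_g_eq {N : ℕ} (f : Fin N → ℝ → ℝ) (part : Fin N → Bool)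
    (ω : ℤ → DSym N) (hadm : Admissible part ω) (n : ℕ) :
    bwImg (gmap f part) ω n =
      (if (ω 0).2 then R else id) '' bwImg f (fun j => (ω j).1) n := by
  have hadm' := admissible_shift part ω hadm n
  unfold bwImg
  have hfun : fw (gmap f part) (fun j => ω (j - (n:ℤ))) n =
      fun x => (if (ω 0).2 then R else id)
        (fw f (fun j => (ω (j - (n:ℤ))).1) n ((if (ω (0 - (n:ℤ))).2 then R else id) x)) := by
    funext x
    have := fw_g_eq f part (fun j => ω (j - (n:ℤ))) hadm' n x
    simpa using this
  rw [hfun]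
  have : (fun x => (if (ω 0).2 then R else id)
        (fw f (fun j => (ω (j - (n:ℤ))).1) n ((if (ω (0 - (n:ℤ))).2 then R else id) x))) '' I01
      = (if (ω 0).2 then R else id) ''
          (fw f (fun j => (ω (j - (n:ℤ))).1) n '' ((if (ω (0 - (n:ℤ))).2 then R else id) '' I01)) := by
    rw [← Set.image_comp, ← Set.image_comp]; rfl
  rw [this]
  have hI : (if (ω (0 - (n:ℤ))).2 then R else id) '' I01 = I01 := by
    cases h : (ω (0 - (n:ℤ))).2 <;> simp [R_image_I01]
  rw [hI]

lemma R_image_eq_preimage (s : Set ℝ) : R '' s = R ⁻¹' s := by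
  ext x
  constructor
  · rintro ⟨y, hy, rfl⟩; simpa [Set.mem_preimage, R_invol] using hy
  · intro hx; exact ⟨R x, hx, R_invol x⟩

/-- **Lemma (symmetry of maximal fibers).** `I_ω = I_{π(ω)}` when `ω₀ ≤ N`,
and `I_ω = R(I_{π(ω)})` when `ω₀ > N`. -/
theorem maxFiber_symmetry {N : ℕ} (f : Fin N → ℝ → ℝ)
    (part : Fin N → Bool) (hor : OrientPart f part)
    (hcont : ∀ i, Continuous (f i))
    (hinj : ∀ i, Set.InjOn (f i) I01)
    (habs : ∀ i, Set.MapsTo (f i) I01 (interior I01)) :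
    ∀ ω : SigmaA N part,
      ((ω.1 0).2 = false → maxFiber (gmap f part) ω.1 = maxFiber f (piA ω)) ∧
      ((ω.1 0).2 = true → maxFiber (gmap f part) ω.1 = R '' maxFiber f (piA ω)) := by
  intro ω
  have key : ∀ n : ℕ, bwImg (gmap f part) ω.1 n =
      (if (ω.1 0).2 then R else id) '' bwImg f (piA ω) n :=
    fun n => bwImg_g_eq f part ω.1 ω.2 n
  constructor
  · intro h0
    unfold maxFiber
    refine Set.iInter_congr fun n => ?_
    rw [key (n + 1), h0]
    simp
  · intro h0
    unfold maxFiber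
    rw [R_image_eq_preimage, Set.preimage_iInter]
    refine Set.iInter_congr fun n => ?_
    rw [key (n + 1), h0, if_pos rfl, R_image_eq_preimage]
end
end
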